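/- Let f : {0,1}^{K+U} → ℝ be a pseudo-Boolean function containing the product x_i x_j, let f' be obtained from f by replacing every occurrence of x_i x_j with a new Boolean variable y, and let λ > max over Boolean inputs of |f| be sufficiently large (in fact λ greater than the spread of f' suffices). Then min over {0,1}^{K+U} of f equals min over all Boolean assignments including y of f' + λ(x_i x_j - 2 x_i y - 2 x_j y + 3 y). -/

import Mathlib

lemma pen_zero (a b : ℝ) (ha : a = 0 ∨ a = 1) (hb : b = 0 ∨ b = 1) :
    a * b - 2 * a * (a * b) - 2 * b * (a * b) + 3 * (a * b) = 0 := by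
  rcases ha with ha | ha <;> rcases hb with hb | hb <;> subst ha <;> subst hb <;> norm_num

lemma pen_nonneg (a b y : ℝ) (ha : a = 0 ∨ a = 1) (hb : b = 0 ∨ b = 1)
    (hy : y = 0 ∨ y = 1) : 0 ≤ a * b - 2 * a * y - 2 * b * y + 3 * y := by
  rcases ha with ha | ha <;> rcases hb with hb | hb <;> rcases hy with hy | hy <;>
    subst ha <;> subst hb <;> subst hy <;> norm_num

lemma pen_one (a b y : ℝ) (ha : a = 0 ∨ a = 1) (hb : b = 0 ∨ b = 1)
    (hy : y = 0 ∨ y = 1) (hne : y ≠ a * b) :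
    1 ≤ a * b - 2 * a * y - 2 * b * y + 3 * y := by
  rcases ha with ha | ha <;> rcases hb with hb | hb <;> rcases hy with hy | hy <;>
    subst ha <;> subst hb <;> subst hy <;> revert hne <;> norm_num

/-- Quadratization. If `f'` is obtained from `f` by replacing every
occurrence of the product `x i * x j` by a new Boolean variable `y` (so that
`f' x (x i * x j) = f x` on Boolean inputs), and `λ` exceeds the spread of `f'`
on Boolean inputs, then the minimum of `f` over Boolean assignments equals the
minimum, over Boolean assignments including `y`, of
`f' + λ (x_i x_j - 2 x_i y - 2 x_j y + 3 y)`. -/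
theorem stmt_2 {K U : ℕ} (f : (Fin (K + U) → ℝ) → ℝ)
    (f' : (Fin (K + U) → ℝ) → ℝ → ℝ) (i j : Fin (K + U)) (lam : ℝ)
    (hrepl : ∀ x : Fin (K + U) → ℝ, (∀ k, x k = 0 ∨ x k = 1) →
      f' x (x i * x j) = f x)
    (hlam : ∀ (x x' : Fin (K + U) → ℝ) (y y' : ℝ),
      (∀ k, x k = 0 ∨ x k = 1) → (y = 0 ∨ y = 1) →
      (∀ k, x' k = 0 ∨ x' k = 1) → (y' = 0 ∨ y' = 1) →
      f' x y - f' x' y' < lam) :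
    sInf {v : ℝ | ∃ x : Fin (K + U) → ℝ, (∀ k, x k = 0 ∨ x k = 1) ∧ v = f x}
      = sInf {v : ℝ | ∃ (x : Fin (K + U) → ℝ) (y : ℝ),
          (∀ k, x k = 0 ∨ x k = 1) ∧ (y = 0 ∨ y = 1) ∧
          v = f' x y + lam * (x i * x j - 2 * x i * y - 2 * x j * y + 3 * y)} := by
  set A := {v : ℝ | ∃ x : Fin (K + U) → ℝ, (∀ k, x k = 0 ∨ x k = 1) ∧ v = f x} with hA
  set B := {v : ℝ | ∃ (x : Fin (K + U) → ℝ) (y : ℝ),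
          (∀ k, x k = 0 ∨ x k = 1) ∧ (y = 0 ∨ y = 1) ∧
          v = f' x y + lam * (x i * x j - 2 * x i * y - 2 * x j * y + 3 * y)} with hB
  have hx0 : ∀ k, (fun _ : Fin (K + U) => (0 : ℝ)) k = 0 ∨ (fun _ : Fin (K + U) => (0 : ℝ)) k = 1 :=
    fun _ => Or.inl rfl
  have hlam0 : 0 < lam := by
    have := hlam (fun _ => 0) (fun _ => 0) 0 0 hx0 (Or.inl rfl) hx0 (Or.inl rfl)
    linarith
  -- A ⊆ B
  have hAB : A ⊆ B := by
    rintro v ⟨x, hx, rfl⟩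
    refine ⟨x, x i * x j, hx, ?_, ?_⟩
    · rcases hx i with h | h <;> rcases hx j with h' | h' <;> rw [h, h'] <;> norm_num
    · rw [pen_zero (x i) (x j) (hx i) (hx j), hrepl x hx]; ring
  -- lower bound
  have hlb : ∀ v ∈ B, f' (fun _ => 0) 0 - lam ≤ v := by
    rintro v ⟨x, y, hx, hy, rfl⟩
    have h1 := hlam (fun _ => 0) x 0 y hx0 (Or.inl rfl) hx hy
    have h2 := pen_nonneg (x i) (x j) y (hx i) (hx j) hy
    nlinarith
  have hBbdd : BddBelow B := ⟨f' (fun _ => 0) 0 - lam, hlb⟩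
  have hAbdd : BddBelow A := hBbdd.mono hAB
  have hAne : A.Nonempty := ⟨f (fun _ => 0), (fun _ => 0), hx0, rfl⟩
  refine le_antisymm ?_ (csInf_le_csInf hBbdd hAne hAB)
  apply le_csInf (hAne.mono hAB)
  rintro v ⟨x, y, hx, hy, rfl⟩
  have hfx : f x ∈ A := ⟨x, hx, rfl⟩
  refine le_trans (csInf_le hAbdd hfx) ?_
  by_cases hcase : y = x i * x j
  · subst hcase
    rw [pen_zero (x i) (x j) (hx i) (hx j), hrepl x hx]; linarith
  · have h1 := pen_one (x i) (x j) y (hx i) (hx j) hy hcase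
    have h2 := hlam x x (x i * x j) y hx ?_ hx hy
    · rw [hrepl x hx] at h2
      nlinarith
    · rcases hx i with h | h <;> rcases hx j with h' | h' <;> rw [h, h'] <;> norm_num
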